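/- Let C ≥ 2 and 1 ≤ K ≤ C be integers and let η ∈ ℝ^C be a conditional probability vector with pairwise distinct entries. If s ∈ ℝ^C is top-K ranking-preserving with respect to η, then R_K(s, η) = (1/K) Σ_{k=1}^{C} min{k−1, K} · η_{[k]}, where η_{[k]} is the k-th largest entry of η; in particular this value is the minimum of R_K(·, η) over ℝ^C. -/

import Mathlib

/-- The `k`-th largest entry (1-indexed, counted with multiplicity) of `s ∈ ℝ^C`. -/
noncomputable def kthLargest {C : ℕ} (s : Fin C → ℝ) (k : ℕ) : ℝ :=
  ((List.ofFn s).insertionSort (· ≤ ·)).getD (C - k) 0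

open Classical in
/-- The rank of label `y` under the score vector `s`, with worst-case tie-breaking
relative to `η`: `π_s(y) = 1 + |{j : s_j > s_y}| + |{j : s_j = s_y ∧ η_j < η_y}|`. -/
noncomputable def rankW {C : ℕ} (η s : Fin C → ℝ) (y : Fin C) : ℕ :=
  1 + (Finset.univ.filter fun j => s y < s j).card
    + (Finset.univ.filter fun j => s j = s y ∧ η j < η y).card

/-- The conditional AUTKC risk `R_K(s, η) = (1/K) Σ_y η_y · min{π_s(y) − 1, K}`. -/
noncomputable def condRisk {C : ℕ} (K : ℕ) (η s : Fin C → ℝ) : ℝ :=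
  (1 / (K : ℝ)) * ∑ y : Fin C, η y * (min (rankW η s y - 1) K : ℕ)

/-- `s` is top-`K` ranking-preserving w.r.t. `η`: for every label `y` and every
`k ∈ {1,…,K}`, `π_s(y) = k` implies that `η_y` is the `k`-th largest entry of `η`. -/
def RPK {C : ℕ} (K : ℕ) (η s : Fin C → ℝ) : Prop :=
  ∀ y : Fin C, ∀ k : ℕ, 1 ≤ k → k ≤ K → rankW η s y = k → η y = kthLargest η k

/-! ### Auxiliary definitions and lemmas -/


noncomputable def lexKey {C : ℕ} (η s : Fin C → ℝ) (y : Fin C) : ℝ ×ₗ ℝ := toLex (-(s y), η y)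

lemma lexKey_lt_iff {C : ℕ} (η s : Fin C → ℝ) (j y : Fin C) :
    lexKey η s j < lexKey η s y ↔ s y < s j ∨ (s j = s y ∧ η j < η y) := by
  simp [lexKey, Prod.Lex.lt_iff, neg_lt_neg_iff, neg_inj, and_comm]

open Classical in
noncomputable def rkn {C : ℕ} (η s : Fin C → ℝ) (y : Fin C) : ℕ :=
  (Finset.univ.filter fun j => lexKey η s j < lexKey η s y).card

open Classical in
lemma rank_eq {C : ℕ} (η s : Fin C → ℝ) (y : Fin C) :
    rankW η s y = 1 + rkn η s y := by
  unfold rankW rkn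
  rw [add_assoc]
  congr 1
  have hset : (Finset.univ.filter fun j => lexKey η s j < lexKey η s y)
      = (Finset.univ.filter fun j => s y < s j) ∪
        (Finset.univ.filter fun j => s j = s y ∧ η j < η y) := by
    ext j
    simp [lexKey_lt_iff]
  rw [hset, Finset.card_union_of_disjoint]
  rw [Finset.disjoint_left]
  intro a ha hb
  simp only [Finset.mem_filter] at ha hb
  exact absurd (hb.2.1 ▸ ha.2) (lt_irrefl _)

open Classical in
lemma rkn_lt {C : ℕ} (η s : Fin C → ℝ) (y : Fin C) : rkn η s y < C := by
  have h : (Finset.univ.filter fun j => lexKey η s j < lexKey η s y) ⊂ Finset.univ := by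
    rw [Finset.ssubset_univ_iff]
    intro h
    have := h ▸ Finset.mem_univ y
    rw [Finset.mem_filter] at this
    exact absurd this.2 (lt_irrefl _)
  have := Finset.card_lt_card h
  simpa [rkn] using this

open Classical in
lemma rkn_mono {C : ℕ} (η s : Fin C → ℝ) {y z : Fin C}
    (h : lexKey η s y < lexKey η s z) : rkn η s y < rkn η s z := by
  apply Finset.card_lt_card
  constructor
  · intro j hj
    rw [Finset.mem_filter] at hj ⊢
    exact ⟨hj.1, hj.2.trans h⟩
  · intro hsub
    have := hsub (by simp [Finset.mem_filter, h] :
      y ∈ Finset.univ.filter fun j => lexKey η s j < lexKey η s z)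
    rw [Finset.mem_filter] at this
    exact absurd this.2 (lt_irrefl _)

lemma lexKey_inj {C : ℕ} {η s : Fin C → ℝ} (hdist : Function.Injective η) :
    Function.Injective (lexKey η s) := by
  intro a b hab
  have := toLex.injective hab
  simp only [Prod.mk.injEq] at this
  exact hdist this.2

noncomputable def rkEquiv {C : ℕ} (η s : Fin C → ℝ) (hdist : Function.Injective η) :
    Fin C ≃ Fin C :=
  Equiv.ofBijective (fun y => ⟨rkn η s y, rkn_lt η s y⟩)
    (Finite.injective_iff_bijective.mp (by
      intro a b hab
      by_contra hne
      have hk : lexKey η s a ≠ lexKey η s b := fun h => hne (lexKey_inj hdist h)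
      rcases hk.lt_or_gt with h | h
      · exact absurd (congrArg Fin.val hab) (Nat.ne_of_lt (rkn_mono η s h))
      · exact absurd (congrArg Fin.val hab).symm (Nat.ne_of_lt (rkn_mono η s h))))

lemma rkEquiv_apply {C : ℕ} (η s : Fin C → ℝ) (hdist : Function.Injective η) (y : Fin C) :
    ((rkEquiv η s hdist y : Fin C) : ℕ) = rkn η s y := rfl

lemma sortLen {C : ℕ} (η : Fin C → ℝ) :
    ((List.ofFn η).insertionSort (· ≤ ·)).length = C := by
  rw [List.length_insertionSort, List.length_ofFn]

/-- ascending sorted entries -/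
noncomputable def ascF {C : ℕ} (η : Fin C → ℝ) (i : Fin C) : ℝ :=
  ((List.ofFn η).insertionSort (· ≤ ·)).get (Fin.cast (sortLen η).symm i)

lemma ofFn_ascF {C : ℕ} (η : Fin C → ℝ) :
    List.ofFn (ascF η) = (List.ofFn η).insertionSort (· ≤ ·) := by
  apply List.ext_getElem
  · rw [List.length_ofFn, sortLen]
  · intro n h1 h2
    simp [ascF, List.getElem_ofFn]

lemma ascF_mono {C : ℕ} (η : Fin C → ℝ) : Monotone (ascF η) := by
  intro i j hij
  exact List.Pairwise.rel_get_of_le (List.pairwise_insertionSort _ _) (by simpa using hij)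

lemma kthLargest_eq_ascF {C : ℕ} (η : Fin C → ℝ) (i : Fin C) :
    kthLargest η (i.val + 1) = ascF η i.rev := by
  unfold kthLargest ascF
  rw [List.getD_eq_getElem _ _ (by rw [sortLen]; omega)]
  congr 1

lemma ascF_sum {C : ℕ} (η : Fin C → ℝ) : ∑ i : Fin C, ascF η i = ∑ y : Fin C, η y := by
  rw [← List.sum_ofFn, ← List.sum_ofFn (f := η), ofFn_ascF]
  exact ((List.ofFn η).perm_insertionSort (· ≤ ·)).sum_eq

noncomputable def bF {C : ℕ} (η : Fin C → ℝ) (i : Fin C) : ℝ := kthLargest η (i.val + 1)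

lemma bF_eq {C : ℕ} (η : Fin C → ℝ) (i : Fin C) : bF η i = ascF η i.rev :=
  kthLargest_eq_ascF η i

lemma bF_anti {C : ℕ} (η : Fin C → ℝ) : Antitone (bF η) := by
  intro i j hij
  rw [bF_eq, bF_eq]
  exact ascF_mono η (Fin.rev_le_rev.mpr hij)

lemma bF_sum {C : ℕ} (η : Fin C → ℝ) : ∑ i : Fin C, bF η i = ∑ y : Fin C, η y := by
  rw [← ascF_sum η]
  rw [← Equiv.sum_comp (Fin.revPerm) (ascF η)]
  exact Finset.sum_congr rfl (fun i _ => bF_eq η i)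

/-- η is a permutation of its decreasing rearrangement. -/
lemma exists_perm_bF {C : ℕ} (η : Fin C → ℝ) :
    ∃ τ : Equiv.Perm (Fin C), ∀ y, η y = bF η (τ y) := by
  have hmono : Monotone (η ∘ Tuple.sort η) := Tuple.monotone_sort η
  have hperm : List.Perm (List.ofFn (η ∘ Tuple.sort η)) (List.ofFn (ascF η)) := by
    refine ((Tuple.sort η).ofFn_comp_perm η).trans ?_
    rw [ofFn_ascF]
    exact ((List.ofFn η).perm_insertionSort (· ≤ ·)).symm
  have heq : η ∘ Tuple.sort η = ascF η := by
    apply List.ofFn_injective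
    exact List.Perm.eq_of_sortedLE hmono.sortedLE_ofFn (ascF_mono η).sortedLE_ofFn hperm
  refine ⟨(Tuple.sort η)⁻¹.trans Fin.revPerm, fun y => ?_⟩
  have : η y = ascF η ((Tuple.sort η)⁻¹ y) := by
    have h2 := congrFun heq ((Tuple.sort η)⁻¹ y)
    simp only [Function.comp_apply, Equiv.Perm.inv_def, Equiv.apply_symm_apply] at h2
    exact h2
  rw [this, bF_eq]
  simp

/-- the coefficient function -/
noncomputable def cF {C : ℕ} (K : ℕ) (i : Fin C) : ℝ := ((min i.val K : ℕ) : ℝ)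

lemma key_sum {C : ℕ} (K : ℕ) (φ ψ : Fin C → ℝ)
    (hsum : ∑ i : Fin C, φ i = ∑ i : Fin C, ψ i)
    (h : ∀ i : Fin C, i.val < K → φ i = ψ i) :
    ∑ i : Fin C, φ i * cF K i = ∑ i : Fin C, ψ i * cF K i := by
  have hmin : ∀ i : Fin C, cF K i = (K : ℝ) - ((K - i.val : ℕ) : ℝ) := by
    intro i
    have h1 : min i.val K + (K - i.val) = K := by omega
    have h2 := congrArg (fun n : ℕ => (n : ℝ)) h1
    push_cast at h2
    unfold cF
    push_cast
    linarith
  have expand : ∀ χ : Fin C → ℝ, ∑ i : Fin C, χ i * cF K i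
      = (∑ i : Fin C, χ i) * (K : ℝ) - ∑ i : Fin C, χ i * ((K - i.val : ℕ) : ℝ) := by
    intro χ
    rw [Finset.sum_mul, ← Finset.sum_sub_distrib]
    exact Finset.sum_congr rfl (fun i _ => by rw [hmin i]; ring)
  rw [expand φ, expand ψ, hsum]
  congr 1
  apply Finset.sum_congr rfl
  intro i _
  by_cases hi : i.val < K
  · rw [h i hi]
  · have hz : K - i.val = 0 := by omega
    rw [hz]
    simp

lemma condRisk_eq {C : ℕ} (K : ℕ) (η s : Fin C → ℝ) (hdist : Function.Injective η) :
    condRisk K η s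
      = (1 / (K : ℝ)) * ∑ i : Fin C, η ((rkEquiv η s hdist).symm i) * cF K i := by
  unfold condRisk
  congr 1
  rw [← Equiv.sum_comp (rkEquiv η s hdist)
    (fun i => η ((rkEquiv η s hdist).symm i) * cF K i)]
  apply Finset.sum_congr rfl
  intro y _
  simp only [Equiv.symm_apply_apply]
  congr 1
  unfold cF
  congr 1
  rw [rkEquiv_apply, rank_eq]
  omega

/-- Value of the optimal conditional AUTKC risk: if `s` is top-`K` ranking-preserving
w.r.t. `η`, then `R_K(s, η) = (1/K) Σ_{k=1}^{C} min{k−1, K} · η_{[k]}`, and this value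
is the minimum of `R_K(·, η)` over `ℝ^C`. -/
theorem autkc_optimal_risk_value
    (C K : ℕ) (hC : 2 ≤ C) (hK1 : 1 ≤ K) (hKC : K ≤ C)
    (η : Fin C → ℝ) (hnn : ∀ y, 0 ≤ η y) (hsum : ∑ y : Fin C, η y = 1)
    (hdist : Function.Injective η) (s : Fin C → ℝ) (hRP : RPK K η s) :
    condRisk K η s
        = (1 / (K : ℝ)) * ∑ k ∈ Finset.Icc 1 C, (min (k - 1) K : ℕ) * kthLargest η k ∧
    ∀ s' : Fin C → ℝ, condRisk K η s ≤ condRisk K η s' := by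
  have hbsum : ∑ i : Fin C, bF η i = 1 := by rw [bF_sum]; exact hsum
  -- RHS in Fin C form
  have hRHS : ∑ k ∈ Finset.Icc 1 C, ((min (k - 1) K : ℕ) : ℝ) * kthLargest η k
      = ∑ i : Fin C, bF η i * cF K i := by
    rw [← Finset.Ico_add_one_right_eq_Icc, Finset.sum_Ico_eq_sum_range]
    have hc : C + 1 - 1 = C := by omega
    rw [hc]
    rw [← Fin.sum_univ_eq_sum_range
      (fun k => ((min (1 + k - 1) K : ℕ) : ℝ) * kthLargest η (1 + k)) C]
    apply Finset.sum_congr rfl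
    intro i _
    unfold bF cF
    rw [mul_comm]
    congr 2
    · omega
    · omega
  -- part 1
  have hφb : ∀ i : Fin C, i.val < K →
      η ((rkEquiv η s hdist).symm i) = bF η i := by
    intro i hi
    have hr : rankW η s ((rkEquiv η s hdist).symm i) = i.val + 1 := by
      rw [rank_eq]
      rw [← rkEquiv_apply η s hdist, Equiv.apply_symm_apply]
      omega
    exact hRP _ (i.val + 1) (by omega) (by omega) hr
  have hφsum : ∑ i : Fin C, η ((rkEquiv η s hdist).symm i) = 1 := by
    rw [Equiv.sum_comp (rkEquiv η s hdist).symm η]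
    exact hsum
  have hpart1 : condRisk K η s = (1 / (K : ℝ)) * ∑ i : Fin C, bF η i * cF K i := by
    rw [condRisk_eq K η s hdist]
    congr 1
    exact key_sum K _ _ (by rw [hφsum, hbsum]) hφb
  constructor
  · rw [hpart1, hRHS]
  -- part 2
  intro s'
  rw [hpart1, condRisk_eq K η s' hdist]
  apply mul_le_mul_of_nonneg_left _ (by positivity)
  obtain ⟨τ, hτ⟩ := exists_perm_bF η
  set e' := rkEquiv η s' hdist
  have hAnti : Antivary (cF K (C := C)) (bF η) := by
    intro i j hlt
    have hji : j ≤ i := by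
      by_contra hc
      push_neg at hc
      exact absurd (bF_anti η hc.le) (not_le.mpr hlt)
    unfold cF
    have : min j.val K ≤ min i.val K := by omega
    exact_mod_cast this
  have σ : Equiv.Perm (Fin C) := e'.symm.trans τ
  have hre := hAnti.sum_smul_le_sum_smul_comp_perm (σ := e'.symm.trans τ)
  simp only [smul_eq_mul, Equiv.trans_apply] at hre
  calc ∑ i : Fin C, bF η i * cF K i = ∑ i : Fin C, cF K i * bF η i := by
        exact Finset.sum_congr rfl (fun i _ => mul_comm _ _)
    _ ≤ ∑ i : Fin C, cF K i * bF η (τ (e'.symm i)) := hre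
    _ = ∑ i : Fin C, η (e'.symm i) * cF K i := by
        refine Finset.sum_congr rfl (fun i _ => ?_)
        rw [← hτ (e'.symm i), mul_comm]
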